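/- Let N ≥ 1, let z_1,…,z_N be real numbers, let Q_0 ≤ Q_1 be reals, and let Z_u ≥ 0. Consider the extended loss sequence z' of length N+2 with z'_1 = Z_u, z'_{n+1} = z_n for 1 ≤ n ≤ N, and z'_{N+2} = Z_u. Then the minimum of ∑_{n=1}^{N+2} z'_n q_n over all feasible unimodal sequences q of length N+2 equals 2 Q_0 Z_u plus the minimum of ∑_{n=1}^{N} z_n q_n over all feasible unimodal sequences q of length N. -/

import Mathlib

/-- `q` is feasible: each coordinate with index in `{1,…,N}` lies in `[Q0, Q1]`. -/
def Feasible (Q0 Q1 : ℝ) (N : ℕ) (q : ℕ → ℝ) : Prop :=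
  ∀ n, 1 ≤ n → n ≤ N → Q0 ≤ q n ∧ q n ≤ Q1

/-- `q` is nondecreasing on indices `{a,…,b}`. -/
def NondecOn (q : ℕ → ℝ) (a b : ℕ) : Prop :=
  ∀ i j, a ≤ i → i ≤ j → j ≤ b → q i ≤ q j

/-- `q` is nonincreasing on indices `{a,…,b}`. -/
def NonincOn (q : ℕ → ℝ) (a b : ℕ) : Prop :=
  ∀ i j, a ≤ i → i ≤ j → j ≤ b → q j ≤ q i

/-- `q` is unimodal on `{1,…,M}`. -/
def UnimodalOn (M : ℕ) (q : ℕ → ℝ) : Prop :=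
  ∃ p, 1 ≤ p ∧ p ≤ M ∧ NondecOn q 1 p ∧ NonincOn q p M

/-- Linear loss `∑_{n=1}^M z_n q_n`. -/
noncomputable def linLoss (z q : ℕ → ℝ) (M : ℕ) : ℝ :=
  ∑ n ∈ Finset.Icc 1 M, z n * q n

/-- The extended loss sequence of length `N + 2`: `z'_1 = Zu`, `z'_{n+1} = z_n` for
`1 ≤ n ≤ N`, and `z'_{N+2} = Zu` (two dummy samples at the ends). -/
def extLoss (z : ℕ → ℝ) (N : ℕ) (Zu : ℝ) : ℕ → ℝ :=
  fun n => if n = 1 then Zu else if n ≤ N + 1 then z (n - 1) else Zu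


/-! ### Auxiliary machinery -/

noncomputable def bestA (z : ℕ → ℝ) (a b : ℕ) : ℝ :=
  (insert (0:ℝ) ((Finset.Icc a b ×ˢ Finset.Icc a b).image
    fun p => ∑ n ∈ Finset.Icc p.1 p.2, z n)).min' ⟨0, Finset.mem_insert_self _ _⟩

lemma bestA_nonpos (z : ℕ → ℝ) (a b : ℕ) : bestA z a b ≤ 0 :=
  Finset.min'_le _ _ (Finset.mem_insert_self _ _)

lemma bestA_le (z : ℕ → ℝ) {a b c d : ℕ} (h1 : a ≤ c) (h2 : c ≤ d) (h3 : d ≤ b) :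
    bestA z a b ≤ ∑ n ∈ Finset.Icc c d, z n :=
  Finset.min'_le _ _ (Finset.mem_insert_of_mem (Finset.mem_image.2
    ⟨(c, d), by simp only [Finset.mem_product, Finset.mem_Icc]; omega, rfl⟩))

lemma bestA_mem (z : ℕ → ℝ) (a b : ℕ) :
    bestA z a b = 0 ∨ ∃ c d, a ≤ c ∧ c ≤ d ∧ d ≤ b ∧ bestA z a b = ∑ n ∈ Finset.Icc c d, z n := by
  have h := Finset.min'_mem (insert (0:ℝ) ((Finset.Icc a b ×ˢ Finset.Icc a b).image
    fun p => ∑ n ∈ Finset.Icc p.1 p.2, z n)) ⟨0, Finset.mem_insert_self _ _⟩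
  rcases Finset.mem_insert.1 h with h0 | hmem
  · exact Or.inl h0
  · obtain ⟨⟨c, d⟩, hcd, heq⟩ := Finset.mem_image.1 hmem
    simp only [Finset.mem_product, Finset.mem_Icc] at hcd
    by_cases hle : c ≤ d
    · exact Or.inr ⟨c, d, hcd.1.1, hle, hcd.2.2, heq.symm⟩
    · left
      rw [show bestA z a b = ∑ n ∈ Finset.Icc c d, z n from heq.symm,
        Finset.Icc_eq_empty (by omega), Finset.sum_empty]

lemma bestA_mono (z : ℕ → ℝ) {a a' b b' : ℕ} (h1 : a ≤ a') (h2 : b' ≤ b) :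
    bestA z a b ≤ bestA z a' b' := by
  rcases bestA_mem z a' b' with h | ⟨c, d, hc, hcd, hd, h⟩
  · rw [h]; exact bestA_nonpos z a b
  · rw [h]; exact bestA_le z (h1.trans hc) hcd (hd.trans h2)

lemma sum_shift (f : ℕ → ℝ) (a b : ℕ) :
    ∑ n ∈ Finset.Icc (a+1) (b+1), f n = ∑ n ∈ Finset.Icc a b, f (n+1) := by
  rw [← Finset.map_add_right_Icc, Finset.sum_map]; rfl

lemma sum_split_one (f : ℕ → ℝ) (m : ℕ) (hm : 1 ≤ m) :
    ∑ n ∈ Finset.Icc 1 m, f n = f 1 + ∑ n ∈ Finset.Icc 2 m, f n := by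
  rw [← Finset.Ioc_insert_left hm, Finset.sum_insert (by simp)]
  congr 1

lemma lower_bound (z : ℕ → ℝ) :
    ∀ (k : ℕ) (Q0 Q1 : ℝ), Q0 ≤ Q1 → ∀ (a b : ℕ) (q : ℕ → ℝ), b + 1 ≤ a + k →
    (∀ n, a ≤ n → n ≤ b → Q0 ≤ q n ∧ q n ≤ Q1) →
    (a ≤ b → ∃ p, a ≤ p ∧ p ≤ b ∧ NondecOn q a p ∧ NonincOn q p b) →
    Q0 * (∑ n ∈ Finset.Icc a b, z n) + (Q1 - Q0) * bestA z a b
      ≤ ∑ n ∈ Finset.Icc a b, z n * q n := by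
  intro k
  induction k with
  | zero =>
    intro Q0 Q1 hQ a b q hk _ _
    rw [Finset.Icc_eq_empty (by omega), Finset.sum_empty, Finset.sum_empty]
    nlinarith [bestA_nonpos z a b]
  | succ k ih =>
    intro Q0 Q1 hQ a b q hk hfeas huni
    by_cases hab : a ≤ b
    swap
    · rw [Finset.Icc_eq_empty (by omega), Finset.sum_empty, Finset.sum_empty]
      nlinarith [bestA_nonpos z a b]
    obtain ⟨p, hap, hpb, hnd, hni⟩ := huni hab
    have hA0 : bestA z a b ≤ 0 := bestA_nonpos z a b
    have hAS : bestA z a b ≤ ∑ n ∈ Finset.Icc a b, z n := bestA_le z le_rfl hab le_rfl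
    by_cases hc : q a ≤ q b
    · -- strip left endpoint
      set c := q a with hcdef
      have hmin : ∀ n, a ≤ n → n ≤ b → c ≤ q n := by
        intro n h1 h2
        by_cases hnp : n ≤ p
        · exact hnd a n le_rfl h1 hnp
        · exact le_trans hc (hni n b (by omega) h2 le_rfl)
      have hc0 : Q0 ≤ c := (hfeas a le_rfl hab).1
      have hc1 : c ≤ Q1 := (hfeas a le_rfl hab).2
      have hih := ih 0 (Q1 - c) (by linarith) (a+1) b (fun n => q n - c)
        (by omega)
        (by intro n h1 h2
            exact ⟨by linarith [hmin n (by omega) h2],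
              by linarith [(hfeas n (by omega) h2).2]⟩)
        (by intro h
            refine ⟨max p (a+1), le_max_right _ _, by omega, ?_, ?_⟩
            · intro i j hi hij hj
              dsimp only
              rcases le_or_gt (a+1) p with hp | hp
              · have : q i ≤ q j := hnd i j (by omega) hij (by omega)
                linarith
              · have : i = j := by omega
                rw [this]
            · intro i j hi hij hj
              dsimp only
              have : q j ≤ q i := hni i j (by omega) hij hj
              linarith)
      simp only [zero_mul, zero_add, sub_zero] at hih
      have hsplit : ∀ f : ℕ → ℝ, ∑ n ∈ Finset.Icc a b, f n
          = f a + ∑ n ∈ Finset.Icc (a+1) b, f n := by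
        intro f
        rw [Finset.Icc_add_one_left_eq_Ioc, ← Finset.Ioc_insert_left hab, Finset.sum_insert (by simp)]
      have key : ∑ n ∈ Finset.Icc a b, z n * q n
          = c * (∑ n ∈ Finset.Icc a b, z n) + ∑ n ∈ Finset.Icc (a+1) b, z n * (q n - c) := by
        simp_rw [mul_sub]
        rw [Finset.sum_sub_distrib, ← Finset.sum_mul, hsplit (fun n => z n * q n), hsplit z,
          ← hcdef]
        ring
      rw [key]
      have hAA' : bestA z a b ≤ bestA z (a+1) b := bestA_mono z (Nat.le_succ a) le_rfl
      nlinarith [hih, mul_nonneg (sub_nonneg.2 hc0) (sub_nonneg.2 hAS),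
        mul_nonneg (sub_nonneg.2 hc1) (sub_nonneg.2 hAA')]
    · -- strip right endpoint
      push_neg at hc
      have hab' : a < b := by
        rcases eq_or_lt_of_le hab with h | h
        · exfalso; rw [h] at hc; exact lt_irrefl _ hc
        · exact h
      obtain ⟨b', rfl⟩ : ∃ b', b = b' + 1 := ⟨b - 1, by omega⟩
      set c := q (b' + 1) with hcdef
      have hmin : ∀ n, a ≤ n → n ≤ b' + 1 → c ≤ q n := by
        intro n h1 h2
        by_cases hnp : p ≤ n
        · exact hni n (b'+1) hnp h2 le_rfl
        · have h3 : q a ≤ q n := hnd a n le_rfl h1 (by omega)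
          linarith
      have hc0 : Q0 ≤ c := (hfeas (b'+1) (by omega) le_rfl).1
      have hc1 : c ≤ Q1 := (hfeas (b'+1) (by omega) le_rfl).2
      have hih := ih 0 (Q1 - c) (by linarith) a b' (fun n => q n - c)
        (by omega)
        (by intro n h1 h2
            exact ⟨by linarith [hmin n h1 (by omega)],
              by linarith [(hfeas n h1 (by omega)).2]⟩)
        (by intro h
            refine ⟨min p b', le_min hap h, min_le_right _ _, ?_, ?_⟩
            · intro i j hi hij hj
              dsimp only
              have : q i ≤ q j := hnd i j hi hij (by omega)
              linarith
            · intro i j hi hij hj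
              dsimp only
              rcases le_or_gt p b' with hp | hp
              · have : q j ≤ q i := hni i j (by omega) hij (by omega)
                linarith
              · have : i = j := by omega
                rw [this])
      simp only [zero_mul, zero_add, sub_zero] at hih
      have key : ∑ n ∈ Finset.Icc a (b'+1), z n * q n
          = c * (∑ n ∈ Finset.Icc a (b'+1), z n) + ∑ n ∈ Finset.Icc a b', z n * (q n - c) := by
        simp_rw [mul_sub]
        rw [Finset.sum_sub_distrib, ← Finset.sum_mul, Finset.sum_Icc_succ_top (by omega : a ≤ b'+1) (fun n => z n * q n), Finset.sum_Icc_succ_top (by omega : a ≤ b'+1) z, ← hcdef]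
        ring
      rw [key]
      have hAA' : bestA z a (b'+1) ≤ bestA z a b' := bestA_mono z le_rfl (Nat.le_succ b')
      nlinarith [hih, mul_nonneg (sub_nonneg.2 hc0) (sub_nonneg.2 hAS),
        mul_nonneg (sub_nonneg.2 hc1) (sub_nonneg.2 hAA')]

lemma attain (z : ℕ → ℝ) (Q0 Q1 : ℝ) (hQ : Q0 ≤ Q1) (M : ℕ) (hM : 1 ≤ M) :
    ∃ q : ℕ → ℝ, (∀ n, 1 ≤ n → n ≤ M → Q0 ≤ q n ∧ q n ≤ Q1) ∧
      (∃ p, 1 ≤ p ∧ p ≤ M ∧ NondecOn q 1 p ∧ NonincOn q p M) ∧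
      ∑ n ∈ Finset.Icc 1 M, z n * q n
        = Q0 * (∑ n ∈ Finset.Icc 1 M, z n) + (Q1 - Q0) * bestA z 1 M := by
  rcases bestA_mem z 1 M with h0 | ⟨c, d, hc, hcd, hd, hbest⟩
  · refine ⟨fun _ => Q0, fun n _ _ => ⟨le_rfl, hQ⟩,
      ⟨1, le_rfl, hM, fun i j _ _ _ => le_rfl, fun i j _ _ _ => le_rfl⟩, ?_⟩
    rw [h0, ← Finset.sum_mul]
    ring
  · refine ⟨fun n => if c ≤ n ∧ n ≤ d then Q1 else Q0, ?_, ⟨c, hc, hcd.trans hd, ?_, ?_⟩, ?_⟩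
    · intro n _ _
      dsimp only
      split_ifs
      · exact ⟨hQ, le_rfl⟩
      · exact ⟨le_rfl, hQ⟩
    · intro i j hi hij hj
      dsimp only
      split_ifs with h1 h2 <;> first | exact le_rfl | exact hQ | omega
    · intro i j hi hij hj
      dsimp only
      split_ifs with h1 h2 <;> first | exact le_rfl | exact hQ | omega
    · have hrw : ∀ n, z n * (if c ≤ n ∧ n ≤ d then Q1 else Q0)
          = z n * Q0 + (if n ∈ Finset.Icc c d then z n * (Q1 - Q0) else 0) := by
        intro n
        by_cases h : c ≤ n ∧ n ≤ d
        · rw [if_pos h, if_pos (Finset.mem_Icc.2 ⟨h.1, h.2⟩)]; ring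
        · rw [if_neg h, if_neg (fun hm => h ⟨(Finset.mem_Icc.1 hm).1, (Finset.mem_Icc.1 hm).2⟩)]
          ring
      simp_rw [hrw]
      rw [Finset.sum_add_distrib, Finset.sum_ite_mem,
        Finset.inter_eq_right.2 (Finset.Icc_subset_Icc (by omega) (by omega)),
        ← Finset.sum_mul, ← Finset.sum_mul, hbest]
      ring

section Ext
variable (z : ℕ → ℝ) (N : ℕ) (Zu : ℝ)

lemma ext_mid {c d : ℕ} (h2 : 2 ≤ c) (hd : d ≤ N + 1) :
    ∑ n ∈ Finset.Icc c d, extLoss z N Zu n = ∑ n ∈ Finset.Icc (c-1) (d-1), z n := by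
  by_cases hcd : c ≤ d
  · obtain ⟨c', rfl⟩ : ∃ c', c = c' + 1 := ⟨c - 1, by omega⟩
    obtain ⟨d', rfl⟩ : ∃ d', d = d' + 1 := ⟨d - 1, by omega⟩
    rw [sum_shift]
    simp only [Nat.add_sub_cancel]
    refine Finset.sum_congr rfl fun n hn => ?_
    rw [Finset.mem_Icc] at hn
    unfold extLoss
    rw [if_neg (by omega), if_pos (by omega)]
    simp
  · rw [Finset.Icc_eq_empty (by omega), Finset.Icc_eq_empty (by omega),
      Finset.sum_empty, Finset.sum_empty]

lemma ext_one : extLoss z N Zu 1 = Zu := by unfold extLoss; rw [if_pos rfl]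

lemma ext_top : extLoss z N Zu (N+2) = Zu := by
  unfold extLoss; rw [if_neg (by omega), if_neg (by omega)]

lemma ext_sum :
    ∑ n ∈ Finset.Icc 1 (N+2), extLoss z N Zu n = 2 * Zu + ∑ n ∈ Finset.Icc 1 N, z n := by
  rw [show N + 2 = (N+1) + 1 from rfl,
    Finset.sum_Icc_succ_top (by omega) (extLoss z N Zu),
    sum_split_one (extLoss z N Zu) (N+1) (by omega), ext_one, ext_top]
  have := ext_mid z N Zu (c := 2) (d := N+1) le_rfl le_rfl
  simp only [Nat.add_sub_cancel, show (2:ℕ) - 1 = 1 from rfl] at this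
  rw [this]
  ring

lemma ext_bestA (hN : 1 ≤ N) (hZu : 0 ≤ Zu) :
    bestA (extLoss z N Zu) 1 (N+2) = bestA z 1 N := by
  set z' := extLoss z N Zu with hz'
  have key3 : ∀ c d, 2 ≤ c → d ≤ N+1 → bestA z 1 N ≤ ∑ n ∈ Finset.Icc c d, z' n := by
    intro c d h2 hd
    by_cases hcd : c ≤ d
    · rw [ext_mid z N Zu h2 hd]
      exact bestA_le z (by omega) (by omega) (by omega)
    · rw [Finset.Icc_eq_empty (by omega), Finset.sum_empty]
      exact bestA_nonpos z 1 N
  have key2 : ∀ c d, 2 ≤ c → d ≤ N+2 → bestA z 1 N ≤ ∑ n ∈ Finset.Icc c d, z' n := by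
    intro c d h2 hd
    by_cases hdN : d ≤ N+1
    · exact key3 c d h2 hdN
    · obtain rfl : d = N + 2 := by omega
      by_cases hc : c ≤ N+2
      · rw [show N + 2 = (N+1) + 1 from rfl, Finset.sum_Icc_succ_top (by omega) z']
        have := key3 c (N+1) h2 le_rfl
        have h0 : z' ((N+1)+1) = Zu := ext_top z N Zu
        rw [h0]
        linarith
      · rw [Finset.Icc_eq_empty (by omega), Finset.sum_empty]
        exact bestA_nonpos z 1 N
  have key1 : ∀ c d, 1 ≤ c → d ≤ N+2 → bestA z 1 N ≤ ∑ n ∈ Finset.Icc c d, z' n := by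
    intro c d h1 hd
    by_cases hc : 2 ≤ c
    · exact key2 c d hc hd
    · obtain rfl : c = 1 := by omega
      by_cases hd1 : 1 ≤ d
      · rw [sum_split_one z' d hd1, show z' 1 = Zu from ext_one z N Zu]
        have := key2 2 d le_rfl hd
        linarith
      · rw [Finset.Icc_eq_empty (by omega), Finset.sum_empty]
        exact bestA_nonpos z 1 N
  apply le_antisymm
  · rcases bestA_mem z 1 N with h0 | ⟨c, d, hc, hcd, hd, hbest⟩
    · rw [h0]; exact bestA_nonpos z' 1 (N+2)
    · rw [hbest]
      have hle := bestA_le z' (a := 1) (b := N+2) (c := c+1) (d := d+1)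
        (by omega) (by omega) (by omega)
      have hmid := ext_mid z N Zu (c := c+1) (d := d+1) (by omega) (by omega)
      simp only [Nat.add_sub_cancel] at hmid
      rw [hmid] at hle
      exact hle
  · rcases bestA_mem z' 1 (N+2) with h0 | ⟨c, d, hc, hcd, hd, hbest⟩
    · rw [h0]; exact bestA_nonpos z 1 N
    · rw [hbest]; exact key1 c d hc hd
end Ext

/-- the minimum of the linear loss for the extended sequence of length
`N + 2` over feasible unimodal sequences equals `2 Q0 Zu` plus the minimum of the
linear loss for the original sequence of length `N`. -/
theorem stmt12 (N : ℕ) (hN : 1 ≤ N) (z : ℕ → ℝ) (Q0 Q1 Zu : ℝ) (hQ : Q0 ≤ Q1)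
    (hZu : 0 ≤ Zu) :
    ∃ m mext : ℝ,
      IsLeast {L : ℝ | ∃ q : ℕ → ℝ, Feasible Q0 Q1 N q ∧ UnimodalOn N q ∧
        L = linLoss z q N} m ∧
      IsLeast {L : ℝ | ∃ q : ℕ → ℝ, Feasible Q0 Q1 (N + 2) q ∧ UnimodalOn (N + 2) q ∧
        L = linLoss (extLoss z N Zu) q (N + 2)} mext ∧
      mext = 2 * Q0 * Zu + m := by
  refine ⟨Q0 * (∑ n ∈ Finset.Icc 1 N, z n) + (Q1 - Q0) * bestA z 1 N,
    Q0 * (∑ n ∈ Finset.Icc 1 (N+2), extLoss z N Zu n)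
      + (Q1 - Q0) * bestA (extLoss z N Zu) 1 (N+2), ?_, ?_, ?_⟩
  · constructor
    · obtain ⟨q, hfeas, huni, hsum⟩ := attain z Q0 Q1 hQ N hN
      exact ⟨q, hfeas, huni, hsum.symm⟩
    · rintro L ⟨q, hfeas, ⟨p, hp1, hpN, hnd, hni⟩, rfl⟩
      exact lower_bound z (N+1) Q0 Q1 hQ 1 N q (by omega) hfeas
        (fun _ => ⟨p, hp1, hpN, hnd, hni⟩)
  · constructor
    · obtain ⟨q, hfeas, huni, hsum⟩ := attain (extLoss z N Zu) Q0 Q1 hQ (N+2) (by omega)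
      exact ⟨q, hfeas, huni, hsum.symm⟩
    · rintro L ⟨q, hfeas, ⟨p, hp1, hpN, hnd, hni⟩, rfl⟩
      exact lower_bound (extLoss z N Zu) (N+3) Q0 Q1 hQ 1 (N+2) q (by omega) hfeas
        (fun _ => ⟨p, hp1, hpN, hnd, hni⟩)
  · rw [ext_sum z N Zu, ext_bestA z N Zu hN hZu]
    ring
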